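/- arXiv:math/0110118 — 2 statements merged into one kernel-verified Lean document; each statement's English description precedes it below -/
import Mathlib

section
/- For measurable f, g on ℝ² and x, y ∈ ℝ₊², (f+g)₂*(x+y) ≤ 2(f₂*(x) + g₂*(y)). -/
open MeasureTheory Set ENNReal Filter

/-- Classical decreasing rearrangement of an `ℝ≥0∞`-valued function. -/
noncomputable def decRe {α : Type*} [MeasurableSpace α] (μ : Measure α)
    (g : α → ℝ≥0∞) (t : ℝ) : ℝ≥0∞ :=
  sInf {l : ℝ≥0∞ | μ {x | l < g x} ≤ ENNReal.ofReal t}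

/-- `φ_E(x)`: the measure of the `x`-section of `E`. -/
noncomputable def phiSec (E : Set (ℝ × ℝ)) (x : ℝ) : ℝ≥0∞ :=
  volume {y : ℝ | (x, y) ∈ E}

/-- The two-dimensional decreasing rearrangement `E*` of a set `E ⊆ ℝ²`. -/
def starSet (E : Set (ℝ × ℝ)) : Set (ℝ × ℝ) :=
  {p | 0 < p.1 ∧ 0 < p.2 ∧ ENNReal.ofReal p.2 < decRe volume (phiSec E) p.1}

/-- The two-dimensional decreasing rearrangement `f₂*` of a function (layer-cake formula). -/
noncomputable def rearr2 (f : ℝ × ℝ → ℝ) (x : ℝ × ℝ) : ℝ≥0∞ :=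
  ∫⁻ t in Set.Ioi (0 : ℝ), (starSet {p | t < |f p|}).indicator (fun _ => (1 : ℝ≥0∞)) x

/-- The open positive quadrant `ℝ₊²`. -/
def Quad : Set (ℝ × ℝ) := Set.Ioi 0 ×ˢ Set.Ioi 0

lemma decRe_mono {α : Type*} [MeasurableSpace α] (μ : Measure α)
    {g₁ g₂ : α → ℝ≥0∞} (h : ∀ x, g₁ x ≤ g₂ x) (t : ℝ) :
    decRe μ g₁ t ≤ decRe μ g₂ t := by
  refine sInf_le_sInf fun l hl => ?_
  exact le_trans (measure_mono fun x hx => lt_of_lt_of_le hx (h x)) hl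

lemma decRe_add_le {α : Type*} [MeasurableSpace α] (μ : Measure α)
    (g₁ g₂ : α → ℝ≥0∞) {s t : ℝ} (hs : 0 ≤ s) (ht : 0 ≤ t) :
    decRe μ (fun x => g₁ x + g₂ x) (s + t) ≤ decRe μ g₁ s + decRe μ g₂ t := by
  set S₁ : Set ℝ≥0∞ := {l | μ {x | l < g₁ x} ≤ ENNReal.ofReal s} with hS₁
  set S₂ : Set ℝ≥0∞ := {l | μ {x | l < g₂ x} ≤ ENNReal.ofReal t} with hS₂
  have key : ∀ l₁ ∈ S₁, ∀ l₂ ∈ S₂,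
      decRe μ (fun x => g₁ x + g₂ x) (s + t) ≤ l₁ + l₂ := by
    intro l₁ h₁ l₂ h₂
    refine sInf_le ?_
    have hsub : {x | l₁ + l₂ < g₁ x + g₂ x} ⊆ {x | l₁ < g₁ x} ∪ {x | l₂ < g₂ x} := by
      intro x hx
      by_contra hcon
      simp only [mem_union, mem_setOf_eq, not_or, not_lt] at hcon
      exact absurd (add_le_add hcon.1 hcon.2) (not_le.2 hx)
    calc μ {x | l₁ + l₂ < g₁ x + g₂ x}
        ≤ μ ({x | l₁ < g₁ x} ∪ {x | l₂ < g₂ x}) := measure_mono hsub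
      _ ≤ μ {x | l₁ < g₁ x} + μ {x | l₂ < g₂ x} := measure_union_le _ _
      _ ≤ ENNReal.ofReal s + ENNReal.ofReal t := add_le_add h₁ h₂
      _ = ENNReal.ofReal (s + t) := (ENNReal.ofReal_add hs ht).symm
  have hempty₁ : {x | (⊤ : ℝ≥0∞) < g₁ x} = ∅ := by
    ext x; simp [(le_top : g₁ x ≤ ⊤).not_gt]
  have hempty₂ : {x | (⊤ : ℝ≥0∞) < g₂ x} = ∅ := by
    ext x; simp [(le_top : g₂ x ≤ ⊤).not_gt]
  have hmem₁ : (⊤ : ℝ≥0∞) ∈ S₁ := by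
    simp only [hS₁, mem_setOf_eq, hempty₁, measure_empty]; exact zero_le
  have hmem₂ : (⊤ : ℝ≥0∞) ∈ S₂ := by
    simp only [hS₂, mem_setOf_eq, hempty₂, measure_empty]; exact zero_le
  have h1 : decRe μ g₁ s = sInf S₁ := rfl
  have h2 : decRe μ g₂ t = sInf S₂ := rfl
  rw [h1, h2]
  refine ENNReal.le_of_forall_pos_le_add fun ε hε hfin => ?_
  have hε2 : (0 : ℝ≥0∞) < (ε : ℝ≥0∞) / 2 := by
    simp [ENNReal.div_pos_iff, hε.ne']
  have ha : sInf S₁ < ∞ := lt_of_le_of_lt le_self_add hfin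
  have hb : sInf S₂ < ∞ := lt_of_le_of_lt le_add_self hfin
  obtain ⟨l₁, hl₁, hlt₁⟩ : ∃ l₁ ∈ S₁, l₁ < sInf S₁ + ε / 2 := by
    exact sInf_lt_iff.1 (ENNReal.lt_add_right ha.ne hε2.ne')
  obtain ⟨l₂, hl₂, hlt₂⟩ : ∃ l₂ ∈ S₂, l₂ < sInf S₂ + ε / 2 := by
    exact sInf_lt_iff.1 (ENNReal.lt_add_right hb.ne hε2.ne')
  calc decRe μ (fun x => g₁ x + g₂ x) (s + t) ≤ l₁ + l₂ := key l₁ hl₁ l₂ hl₂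
    _ ≤ (sInf S₁ + ε / 2) + (sInf S₂ + ε / 2) := add_le_add hlt₁.le hlt₂.le
    _ = sInf S₁ + sInf S₂ + (ε / 2 + ε / 2) := add_add_add_comm _ _ _ _
    _ = sInf S₁ + sInf S₂ + ε := by rw [ENNReal.add_halves]

lemma starSet_mono {E F : Set (ℝ × ℝ)} (h : E ⊆ F) : starSet E ⊆ starSet F := by
  intro p hp
  obtain ⟨h1, h2, h3⟩ := hp
  refine ⟨h1, h2, h3.trans_le ?_⟩
  refine decRe_mono _ (fun x => ?_) _
  unfold phiSec
  exact measure_mono fun y hy => h hy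

lemma starSet_union_split {A B : Set (ℝ × ℝ)} {x y : ℝ × ℝ}
    (hx : x ∈ Quad) (hy : y ∈ Quad) (h : x + y ∈ starSet (A ∪ B)) :
    x ∈ starSet A ∨ y ∈ starSet B := by
  obtain ⟨hx1, hx2⟩ := hx
  obtain ⟨hy1, hy2⟩ := hy
  simp only [mem_Ioi] at hx1 hx2 hy1 hy2
  have hadd1 : (x + y).1 = x.1 + y.1 := rfl
  have hadd2 : (x + y).2 = x.2 + y.2 := rfl
  have hkey : ENNReal.ofReal x.2 + ENNReal.ofReal y.2
      < decRe volume (phiSec A) x.1 + decRe volume (phiSec B) y.1 := by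
    have h1 := h.2.2
    rw [hadd2, ENNReal.ofReal_add hx2.le hy2.le] at h1
    refine h1.trans_le ?_
    rw [hadd1]
    calc decRe volume (phiSec (A ∪ B)) (x.1 + y.1)
        ≤ decRe volume (fun s => phiSec A s + phiSec B s) (x.1 + y.1) := by
          refine decRe_mono _ (fun s => ?_) _
          exact measure_union_le {y | (s, y) ∈ A} {y | (s, y) ∈ B}
      _ ≤ decRe volume (phiSec A) x.1 + decRe volume (phiSec B) y.1 :=
          decRe_add_le _ _ _ hx1.le hy1.le
  by_contra hcon
  push_neg at hcon
  have hA : decRe volume (phiSec A) x.1 ≤ ENNReal.ofReal x.2 := by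
    by_contra hA'
    exact hcon.1 ⟨hx1, hx2, not_le.1 hA'⟩
  have hB : decRe volume (phiSec B) y.1 ≤ ENNReal.ofReal y.2 := by
    by_contra hB'
    exact hcon.2 ⟨hy1, hy2, not_le.1 hB'⟩
  exact absurd (add_le_add hA hB) (not_le.2 hkey)

lemma halve_lintegral (F : ℝ → ℝ≥0∞) (hF : Measurable F) :
    ∫⁻ t in Set.Ioi (0 : ℝ), F (t / 2) = 2 * ∫⁻ s in Set.Ioi (0 : ℝ), F s := by
  have hmap := Real.map_volume_mul_left (a := (2:ℝ)⁻¹) (by norm_num)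
  have hpre : (fun t : ℝ => (2:ℝ)⁻¹ * t) ⁻¹' Set.Ioi 0 = Set.Ioi 0 := by
    ext t; simp only [mem_preimage, mem_Ioi]
    constructor
    · intro h; nlinarith
    · intro h; positivity
  have h := setLIntegral_map (μ := (volume : Measure ℝ)) (s := Set.Ioi (0:ℝ)) measurableSet_Ioi hF
    (measurable_const_mul ((2:ℝ)⁻¹))
  rw [hmap, hpre] at h
  have h2 : (∫⁻ y in Set.Ioi (0:ℝ), F y
      ∂((ENNReal.ofReal |((2:ℝ)⁻¹)⁻¹|) • volume)) = 2 * ∫⁻ s in Set.Ioi (0:ℝ), F s := by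
    rw [Measure.restrict_smul, lintegral_smul_measure]
    norm_num
  rw [h2] at h
  rw [h]
  refine setLIntegral_congr_fun measurableSet_Ioi (fun t _ => ?_)
  congr 1
  ring

theorem stmt9 (f g : ℝ × ℝ → ℝ) (hf : Measurable f) (hg : Measurable g)
    (x y : ℝ × ℝ) (hx : x ∈ Quad) (hy : y ∈ Quad) :
    rearr2 (fun p => f p + g p) (x + y) ≤ 2 * (rearr2 f x + rearr2 g y) := by
  set F : ℝ → ℝ≥0∞ := fun t => (starSet {p | t < |f p|}).indicator (fun _ => (1 : ℝ≥0∞)) x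
    with hFdef
  set G : ℝ → ℝ≥0∞ := fun t => (starSet {p | t < |g p|}).indicator (fun _ => (1 : ℝ≥0∞)) y
    with hGdef
  have hFanti : Antitone F := by
    intro s t hst
    refine indicator_le_indicator_of_subset (starSet_mono fun p hp => ?_) (fun _ => zero_le) x
    exact lt_of_le_of_lt hst hp
  have hGanti : Antitone G := by
    intro s t hst
    refine indicator_le_indicator_of_subset (starSet_mono fun p hp => ?_) (fun _ => zero_le) y
    exact lt_of_le_of_lt hst hp
  have hFm : Measurable F := hFanti.measurable
  have hGm : Measurable G := hGanti.measurable
  have hpt : ∀ t : ℝ,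
      (starSet {p | t < |f p + g p|}).indicator (fun _ => (1 : ℝ≥0∞)) (x + y)
      ≤ F (t / 2) + G (t / 2) := by
    intro t
    by_cases hmem : x + y ∈ starSet {p | t < |f p + g p|}
    · have hsub : {p : ℝ × ℝ | t < |f p + g p|}
          ⊆ {p | t / 2 < |f p|} ∪ {p | t / 2 < |g p|} := by
        intro p hp
        by_contra hcon
        simp only [mem_union, mem_setOf_eq, not_or, not_lt] at hcon
        have : |f p + g p| ≤ |f p| + |g p| := abs_add_le _ _
        simp only [mem_setOf_eq] at hp
        linarith [hcon.1, hcon.2]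
      have := starSet_union_split hx hy (starSet_mono hsub hmem)
      rw [indicator_of_mem hmem]
      rcases this with h | h
      · have hF1 : F (t / 2) = 1 := indicator_of_mem h _
        rw [hF1]; exact le_self_add
      · have hG1 : G (t / 2) = 1 := indicator_of_mem h _
        rw [hG1]; exact le_add_self
    · simp [indicator_of_notMem hmem]
  calc rearr2 (fun p => f p + g p) (x + y)
      ≤ ∫⁻ t in Set.Ioi (0 : ℝ), (F (t / 2) + G (t / 2)) := by
        refine lintegral_mono fun t => hpt t
    _ = (∫⁻ t in Set.Ioi (0 : ℝ), F (t / 2)) + ∫⁻ t in Set.Ioi (0 : ℝ), G (t / 2) := by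
        exact lintegral_add_left (hFm.comp (measurable_id.div_const 2)) _
    _ = 2 * rearr2 f x + 2 * rearr2 g y := by
        rw [halve_lintegral F hFm, halve_lintegral G hGm]; rfl
    _ = 2 * (rearr2 f x + rearr2 g y) := (mul_add _ _ _).symm
end

section
/- For measurable functions f, g on ℝ², ∫_{ℝ²} |f g| dx ≤ ∫_{ℝ₊²} f₂* g₂* dx ≤ ∫₀^∞ f*(t) g*(t) dt, a two-dimensional refinement of the Hardy–Littlewood inequality. -/
open MeasureTheory Set ENNReal Filter

/-! Auxiliary lemmas -/


lemma vol_pos_lt (c : ℝ≥0∞) :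
    volume {y : ℝ | 0 < y ∧ ENNReal.ofReal y < c} = c := by
  rcases eq_or_ne c ∞ with rfl | hc
  · have h : {y : ℝ | 0 < y ∧ ENNReal.ofReal y < ∞} = Ioi 0 := by
      ext y; simp [ofReal_lt_top]
    rw [h, Real.volume_Ioi]
  · have h : {y : ℝ | 0 < y ∧ ENNReal.ofReal y < c} = Ioo 0 c.toReal := by
      ext y
      simp only [mem_setOf_eq, mem_Ioo, and_congr_right_iff]
      intro hy
      exact ENNReal.ofReal_lt_iff_lt_toReal hy.le hc
    rw [h, Real.volume_Ioo, sub_zero, ENNReal.ofReal_toReal hc]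

lemma decRe_antitone {α : Type*} [MeasurableSpace α] (μ : Measure α) (h : α → ℝ≥0∞) :
    Antitone (decRe μ h) := fun x y hxy =>
  sInf_le_sInf fun l hl => le_trans hl (ENNReal.ofReal_le_ofReal hxy)

lemma decRe_measurable {α : Type*} [MeasurableSpace α] (μ : Measure α) (h : α → ℝ≥0∞) :
    Measurable (decRe μ h) := (decRe_antitone μ h).measurable

lemma lt_decRe_iff {α : Type*} [MeasurableSpace α] (μ : Measure α) {h : α → ℝ≥0∞}
    (l : ℝ≥0∞) (x : ℝ) :
    l < decRe μ h x ↔ ENNReal.ofReal x < μ {a | l < h a} := by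
  constructor
  · intro H
    by_contra hcon
    push_neg at hcon
    have : decRe μ h x ≤ l := by exact sInf_le hcon
    exact absurd this H.not_ge
  · contrapose!
    intro H
    rcases eq_or_ne l ∞ with rfl | hl
    · have : {a | (∞ : ℝ≥0∞) < h a} = ∅ := by
        ext a; simp [not_top_lt]
      simp [this]
    have key : ∀ n : ℕ, μ {a | l + (n : ℝ≥0∞)⁻¹ < h a} ≤ ENNReal.ofReal x := by
      intro n
      have hn0 : ((n : ℝ≥0∞))⁻¹ ≠ 0 := ENNReal.inv_ne_zero.mpr (ENNReal.natCast_ne_top n)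
      have hlt : decRe μ h x < l + (n : ℝ≥0∞)⁻¹ :=
        lt_of_le_of_lt H (ENNReal.lt_add_right hl hn0)
      obtain ⟨s, hs, hs2⟩ := sInf_lt_iff.mp hlt
      calc μ {a | l + (n : ℝ≥0∞)⁻¹ < h a} ≤ μ {a | s < h a} :=
            measure_mono fun a ha => lt_trans hs2 ha
        _ ≤ ENNReal.ofReal x := hs
    have hU : {a | l < h a} = ⋃ n : ℕ, {a | l + (n : ℝ≥0∞)⁻¹ < h a} := by
      ext a
      simp only [mem_iUnion, mem_setOf_eq]
      constructor
      · intro ha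
        rcases eq_or_ne (h a) ∞ with he | he
        · refine ⟨1, ?_⟩
          rw [he]
          exact ENNReal.add_lt_top.mpr ⟨hl.lt_top, by simp⟩
        · obtain ⟨n, hn⟩ := ENNReal.exists_inv_nat_lt (tsub_pos_of_lt ha).ne'
          refine ⟨n, ?_⟩
          calc l + (n : ℝ≥0∞)⁻¹ < l + (h a - l) := ENNReal.add_lt_add_left hl hn
            _ = h a := add_tsub_cancel_of_le ha.le
      · rintro ⟨n, hn⟩
        exact lt_of_le_of_lt le_self_add hn
    have hdir : Directed (· ⊆ ·) fun n : ℕ => {a | l + (n : ℝ≥0∞)⁻¹ < h a} := by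
      intro m n
      refine ⟨max m n, fun a ha => ?_, fun a ha => ?_⟩
      · refine lt_of_le_of_lt (add_le_add_right (ENNReal.inv_le_inv.mpr ?_) l) ha
        exact_mod_cast le_max_left m n
      · refine lt_of_le_of_lt (add_le_add_right (ENNReal.inv_le_inv.mpr ?_) l) ha
        exact_mod_cast le_max_right m n
    rw [hU, hdir.measure_iUnion]
    exact iSup_le key


lemma layer_indicator (c : ℝ≥0∞) :
    ∫⁻ s in Ioi (0 : ℝ), ({s' : ℝ | ENNReal.ofReal s' < c}).indicator
      (fun _ => (1 : ℝ≥0∞)) s = c := by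
  have hm : MeasurableSet {s' : ℝ | ENNReal.ofReal s' < c} :=
    measurableSet_lt ENNReal.measurable_ofReal measurable_const
  rw [lintegral_indicator hm, setLIntegral_one, Measure.restrict_apply hm]
  have h : {s' : ℝ | ENNReal.ofReal s' < c} ∩ Ioi 0 = {y : ℝ | 0 < y ∧ ENNReal.ofReal y < c} := by
    ext y
    simp only [mem_inter_iff, mem_setOf_eq, mem_Ioi]
    tauto
  rw [h, vol_pos_lt]

lemma lintegral_eq_layer {α : Type*} [MeasurableSpace α] (μ : Measure α) [SigmaFinite μ]
    {h : α → ℝ≥0∞} (hh : Measurable h) :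
    ∫⁻ a, h a ∂μ = ∫⁻ l in Ioi (0 : ℝ), μ {a | ENNReal.ofReal l < h a} := by
  have hM : MeasurableSet {p : α × ℝ | ENNReal.ofReal p.2 < h p.1} :=
    measurableSet_lt (ENNReal.measurable_ofReal.comp measurable_snd) (hh.comp measurable_fst)
  have key : ∀ a, h a = ∫⁻ l in Ioi (0 : ℝ),
      {p : α × ℝ | ENNReal.ofReal p.2 < h p.1}.indicator (fun _ => (1 : ℝ≥0∞)) (a, l) := by
    intro a
    rw [← layer_indicator (h a)]
    refine lintegral_congr fun l => ?_
    simp [Set.indicator_apply]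
  calc ∫⁻ a, h a ∂μ
      = ∫⁻ a, (∫⁻ l in Ioi (0 : ℝ),
          {p : α × ℝ | ENNReal.ofReal p.2 < h p.1}.indicator (fun _ => (1 : ℝ≥0∞)) (a, l)) ∂μ :=
        lintegral_congr key
    _ = ∫⁻ l in Ioi (0 : ℝ), ∫⁻ a,
          {p : α × ℝ | ENNReal.ofReal p.2 < h p.1}.indicator (fun _ => (1 : ℝ≥0∞)) (a, l) ∂μ := by
        exact lintegral_lintegral_swap ((measurable_const.indicator hM).aemeasurable)
    _ = ∫⁻ l in Ioi (0 : ℝ), μ {a | ENNReal.ofReal l < h a} := by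
        refine lintegral_congr fun l => ?_
        have : (fun a => {p : α × ℝ | ENNReal.ofReal p.2 < h p.1}.indicator
            (fun _ => (1 : ℝ≥0∞)) (a, l))
            = fun a => ({a' | ENNReal.ofReal l < h a'}).indicator (fun _ => (1 : ℝ≥0∞)) a := by
          funext a; simp [Set.indicator_apply]
        rw [this]
        exact lintegral_indicator_one (measurableSet_lt measurable_const hh)

lemma tonelli_ind {α : Type*} [MeasurableSpace α] (ν : Measure α) [SigmaFinite ν]
    (A B : ℝ → Set α)
    (hA : MeasurableSet {p : ℝ × α | p.2 ∈ A p.1})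
    (hB : MeasurableSet {p : ℝ × α | p.2 ∈ B p.1}) :
    ∫⁻ x, (∫⁻ s in Ioi (0 : ℝ), (A s).indicator (fun _ => (1 : ℝ≥0∞)) x) *
        (∫⁻ t in Ioi (0 : ℝ), (B t).indicator (fun _ => (1 : ℝ≥0∞)) x) ∂ν
      = ∫⁻ s in Ioi (0 : ℝ), ∫⁻ t in Ioi (0 : ℝ), ν (A s ∩ B t) := by
  have hAx : ∀ x, Measurable fun s => (A s).indicator (fun _ => (1 : ℝ≥0∞)) x := by
    intro x
    have h1 : (fun s => (A s).indicator (fun _ => (1 : ℝ≥0∞)) x)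
        = ((fun s => (s, x)) ⁻¹' {p : ℝ × α | p.2 ∈ A p.1}).indicator (fun _ => (1 : ℝ≥0∞)) := by
      funext s; rfl
    rw [h1]
    exact measurable_const.indicator (hA.preimage measurable_prodMk_right)
  have hBx : ∀ x, Measurable fun t => (B t).indicator (fun _ => (1 : ℝ≥0∞)) x := by
    intro x
    have h1 : (fun t => (B t).indicator (fun _ => (1 : ℝ≥0∞)) x)
        = ((fun t => (t, x)) ⁻¹' {p : ℝ × α | p.2 ∈ B p.1}).indicator (fun _ => (1 : ℝ≥0∞)) := by
      funext t; rfl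
    rw [h1]
    exact measurable_const.indicator (hB.preimage measurable_prodMk_right)
  -- measurable indicator functions on product spaces
  have hindA : Measurable fun q : α × ℝ => (A q.2).indicator (fun _ => (1 : ℝ≥0∞)) q.1 := by
    have h1 : (fun q : α × ℝ => (A q.2).indicator (fun _ => (1 : ℝ≥0∞)) q.1)
        = ((fun q : α × ℝ => (q.2, q.1)) ⁻¹' {p : ℝ × α | p.2 ∈ A p.1}).indicator
            (fun _ => (1 : ℝ≥0∞)) := by
      funext q; rfl
    rw [h1]
    exact measurable_const.indicator (hA.preimage (measurable_snd.prodMk measurable_fst))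
  have hindB : Measurable fun q : α × ℝ => (B q.2).indicator (fun _ => (1 : ℝ≥0∞)) q.1 := by
    have h1 : (fun q : α × ℝ => (B q.2).indicator (fun _ => (1 : ℝ≥0∞)) q.1)
        = ((fun q : α × ℝ => (q.2, q.1)) ⁻¹' {p : ℝ × α | p.2 ∈ B p.1}).indicator
            (fun _ => (1 : ℝ≥0∞)) := by
      funext q; rfl
    rw [h1]
    exact measurable_const.indicator (hB.preimage (measurable_snd.prodMk measurable_fst))
  have step1 : ∀ x, (∫⁻ s in Ioi (0 : ℝ), (A s).indicator (fun _ => (1 : ℝ≥0∞)) x) *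
      (∫⁻ t in Ioi (0 : ℝ), (B t).indicator (fun _ => (1 : ℝ≥0∞)) x)
      = ∫⁻ s in Ioi (0 : ℝ), ∫⁻ t in Ioi (0 : ℝ),
          (A s).indicator (fun _ => (1 : ℝ≥0∞)) x * (B t).indicator (fun _ => (1 : ℝ≥0∞)) x := by
    intro x
    rw [← lintegral_mul_const'' _ (hAx x).aemeasurable]
    exact lintegral_congr fun s => (lintegral_const_mul'' _ (hBx x).aemeasurable).symm
  rw [lintegral_congr step1]
  -- swap x and s
  have hG : Measurable fun q : α × ℝ => ∫⁻ t in Ioi (0 : ℝ),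
      (A q.2).indicator (fun _ => (1 : ℝ≥0∞)) q.1 * (B t).indicator (fun _ => (1 : ℝ≥0∞)) q.1 := by
    refine Measurable.lintegral_prod_right' (f := fun r : (α × ℝ) × ℝ =>
      (A r.1.2).indicator (fun _ => (1 : ℝ≥0∞)) r.1.1 *
        (B r.2).indicator (fun _ => (1 : ℝ≥0∞)) r.1.1) ?_
    exact (hindA.comp measurable_fst).mul
      (hindB.comp ((measurable_fst.comp measurable_fst).prodMk measurable_snd))
  rw [lintegral_lintegral_swap hG.aemeasurable]
  refine lintegral_congr fun s => ?_
  have hswap2 : Measurable fun q : α × ℝ =>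
      (A s).indicator (fun _ => (1 : ℝ≥0∞)) q.1 * (B q.2).indicator (fun _ => (1 : ℝ≥0∞)) q.1 := by
    have hAs : MeasurableSet (A s) := hA.preimage (measurable_prodMk_left (x := s))
    exact ((measurable_const.indicator hAs).comp measurable_fst).mul hindB
  rw [lintegral_lintegral_swap hswap2.aemeasurable]
  refine lintegral_congr fun t => ?_
  have hAs : MeasurableSet (A s) := hA.preimage (measurable_prodMk_left (x := s))
  have hBt : MeasurableSet (B t) := hB.preimage (measurable_prodMk_left (x := t))
  have h2 : (fun x => (A s).indicator (fun _ => (1 : ℝ≥0∞)) x *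
      (B t).indicator (fun _ => (1 : ℝ≥0∞)) x)
      = (A s ∩ B t).indicator (fun _ => (1 : ℝ≥0∞)) := by
    funext x
    by_cases hx1 : x ∈ A s <;> by_cases hx2 : x ∈ B t <;>
      simp [Set.indicator_apply, hx1, hx2]
  rw [h2]
  exact lintegral_indicator_one (hAs.inter hBt)

lemma phiSec_measurable {E : Set (ℝ × ℝ)} (hE : MeasurableSet E) :
    Measurable (phiSec E) :=
  measurable_measure_prodMk_left hE

lemma starSet_measurable (E : Set (ℝ × ℝ)) : MeasurableSet (starSet E) := by
  have h1 : Measurable fun p : ℝ × ℝ => ENNReal.ofReal p.2 := measurable_snd.ennreal_ofReal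
  have h2 : Measurable fun p : ℝ × ℝ => decRe volume (phiSec E) p.1 :=
    (decRe_measurable volume (phiSec E)).comp measurable_fst
  have hs : starSet E = ({p : ℝ × ℝ | 0 < p.1} ∩ {p : ℝ × ℝ | 0 < p.2}) ∩
      {p : ℝ × ℝ | ENNReal.ofReal p.2 < decRe volume (phiSec E) p.1} := by
    ext p
    simp only [starSet, mem_inter_iff, mem_setOf_eq]
    tauto
  rw [hs]
  exact ((measurable_fst measurableSet_Ioi).inter (measurable_snd measurableSet_Ioi)).inter
    (measurableSet_lt h1 h2)

lemma starSet_subset_Quad (E : Set (ℝ × ℝ)) : starSet E ⊆ Quad :=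
  fun p hp => ⟨hp.1, hp.2.1⟩

lemma star_inter_sec_vol (E F : Set (ℝ × ℝ)) (x : ℝ) :
    volume (Prod.mk x ⁻¹' (starSet E ∩ starSet F))
      = (Ioi (0 : ℝ)).indicator
          (fun x => min (decRe volume (phiSec E) x) (decRe volume (phiSec F) x)) x := by
  by_cases hx : 0 < x
  · rw [Set.indicator_of_mem (show x ∈ Ioi (0:ℝ) from hx)]
    rw [← vol_pos_lt (min (decRe volume (phiSec E) x) (decRe volume (phiSec F) x))]
    congr 1
    ext y
    simp only [mem_preimage, mem_inter_iff, starSet, mem_setOf_eq, lt_min_iff, hx, true_and]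
    tauto
  · have h : Prod.mk x ⁻¹' (starSet E ∩ starSet F) = ∅ := by
      ext y
      simp only [mem_preimage, mem_inter_iff, starSet, mem_setOf_eq, mem_empty_iff_false,
        iff_false]
      tauto
    rw [h, measure_empty, Set.indicator_of_notMem (show x ∉ Ioi (0:ℝ) from hx)]

lemma vol_starSet_inter (E F : Set (ℝ × ℝ)) :
    volume (starSet E ∩ starSet F)
      = ∫⁻ x in Ioi (0 : ℝ),
          min (decRe volume (phiSec E) x) (decRe volume (phiSec F) x) := by
  rw [Measure.volume_eq_prod, Measure.prod_apply ((starSet_measurable E).inter (starSet_measurable F))]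
  rw [lintegral_congr (star_inter_sec_vol E F)]
  exact lintegral_indicator measurableSet_Ioi _

lemma decRe_layer {φ ψ : ℝ → ℝ≥0∞} (hφ : Measurable φ) (hψ : Measurable ψ) :
    ∫⁻ x in Ioi (0 : ℝ), min (decRe volume φ x) (decRe volume ψ x)
      = ∫⁻ l in Ioi (0 : ℝ),
          min (volume {a | ENNReal.ofReal l < φ a}) (volume {a | ENNReal.ofReal l < ψ a}) := by
  have hd : Measurable fun x => min (decRe volume φ x) (decRe volume ψ x) :=
    (decRe_measurable volume φ).min (decRe_measurable volume ψ)
  rw [lintegral_eq_layer (volume.restrict (Ioi (0:ℝ))) hd]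
  refine lintegral_congr fun l => ?_
  have hm : MeasurableSet {x : ℝ | ENNReal.ofReal l <
      min (decRe volume φ x) (decRe volume ψ x)} := measurableSet_lt measurable_const hd
  rw [Measure.restrict_apply hm]
  have h : {x : ℝ | ENNReal.ofReal l < min (decRe volume φ x) (decRe volume ψ x)} ∩ Ioi 0
      = {x : ℝ | 0 < x ∧ ENNReal.ofReal x <
          min (volume {a | ENNReal.ofReal l < φ a}) (volume {a | ENNReal.ofReal l < ψ a})} := by
    ext x
    simp only [mem_inter_iff, mem_setOf_eq, mem_Ioi, lt_min_iff,
      lt_decRe_iff volume (ENNReal.ofReal l) x]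
    tauto
  rw [h, vol_pos_lt]

lemma vol_starSet_inter_le (E F : Set (ℝ × ℝ)) (hE : MeasurableSet E) (hF : MeasurableSet F) :
    volume (starSet E ∩ starSet F) ≤ min (volume E) (volume F) := by
  have hEq : ∀ (G : Set (ℝ × ℝ)), MeasurableSet G → volume (starSet G) = volume G := by
    intro G hG
    have h1 : volume (starSet G) = ∫⁻ x in Ioi (0 : ℝ), decRe volume (phiSec G) x := by
      rw [← Set.inter_self (starSet G), vol_starSet_inter]
      simp only [min_self]
    rw [h1]
    have h2 : ∫⁻ x in Ioi (0 : ℝ), decRe volume (phiSec G) x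
        = ∫⁻ l in Ioi (0 : ℝ), volume {a | ENNReal.ofReal l < phiSec G a} := by
      have := decRe_layer (phiSec_measurable hG) (phiSec_measurable hG)
      simpa only [min_self] using this
    rw [h2, ← lintegral_eq_layer volume (phiSec_measurable hG), Measure.volume_eq_prod,
      Measure.prod_apply hG]
    rfl
  refine le_min ?_ ?_
  · rw [← hEq E hE]
    exact measure_mono inter_subset_left
  · rw [← hEq F hF]
    exact measure_mono inter_subset_right

lemma vol_inter_le_star (E F : Set (ℝ × ℝ)) (hE : MeasurableSet E) (hF : MeasurableSet F) :
    volume (E ∩ F) ≤ volume (starSet E ∩ starSet F) := by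
  have hφE := phiSec_measurable hE
  have hφF := phiSec_measurable hF
  have step1 : volume (E ∩ F) ≤ ∫⁻ x, min (phiSec E x) (phiSec F x) := by
    rw [Measure.volume_eq_prod, Measure.prod_apply (hE.inter hF)]
    refine lintegral_mono fun x => ?_
    exact le_min (measure_mono fun y hy => hy.1) (measure_mono fun y hy => hy.2)
  refine le_trans step1 ?_
  rw [vol_starSet_inter, decRe_layer hφE hφF, lintegral_eq_layer volume (hφE.min hφF)]
  refine lintegral_mono fun l => ?_
  have h : {a : ℝ | ENNReal.ofReal l < min (phiSec E a) (phiSec F a)}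
      = {a | ENNReal.ofReal l < phiSec E a} ∩ {a | ENNReal.ofReal l < phiSec F a} := by
    ext a; simp [lt_min_iff]
  rw [h]
  exact le_min (measure_mono inter_subset_left) (measure_mono inter_subset_right)

lemma star_joint_measurable {f : ℝ × ℝ → ℝ} (hf : Measurable f) :
    MeasurableSet {p : ℝ × (ℝ × ℝ) | p.2 ∈ starSet {q | p.1 < |f q|}} := by
  have hM1 : MeasurableSet {r : (ℝ × ℝ) × ℝ | r.1.1 < |f (r.1.2, r.2)|} :=
    measurableSet_lt measurable_fst.fst
      (hf.abs.comp (measurable_fst.snd.prodMk measurable_snd))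
  have hΦ : Measurable fun q : ℝ × ℝ => volume {z : ℝ | q.1 < |f (q.2, z)|} :=
    measurable_measure_prodMk_left (ν := volume) hM1
  have hM2 : MeasurableSet {r : (ℝ × ℝ) × ℝ |
      ENNReal.ofReal r.1.2 < volume {z : ℝ | r.1.1 < |f (r.2, z)|}} :=
    measurableSet_lt measurable_fst.snd.ennreal_ofReal
      (hΦ.comp (measurable_fst.fst.prodMk measurable_snd))
  have hW : Measurable fun q : ℝ × ℝ =>
      volume {y : ℝ | ENNReal.ofReal q.2 < volume {z : ℝ | q.1 < |f (y, z)|}} :=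
    measurable_measure_prodMk_left (ν := volume) hM2
  have hset : {p : ℝ × (ℝ × ℝ) | p.2 ∈ starSet {q | p.1 < |f q|}}
      = ({p : ℝ × (ℝ × ℝ) | 0 < p.2.1} ∩ {p : ℝ × (ℝ × ℝ) | 0 < p.2.2}) ∩
        {p : ℝ × (ℝ × ℝ) | ENNReal.ofReal p.2.1 <
          volume {y : ℝ | ENNReal.ofReal p.2.2 < volume {z : ℝ | p.1 < |f (y, z)|}}} := by
    ext p
    simp only [starSet, mem_setOf_eq, mem_inter_iff]
    rw [lt_decRe_iff]
    have h : {a : ℝ | ENNReal.ofReal p.2.2 < phiSec {q | p.1 < |f q|} a}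
        = {y : ℝ | ENNReal.ofReal p.2.2 < volume {z : ℝ | p.1 < |f (y, z)|}} := rfl
    rw [h]
    tauto
  rw [hset]
  exact ((measurable_snd.fst measurableSet_Ioi).inter
      (measurable_snd.snd measurableSet_Ioi)).inter
    (measurableSet_lt measurable_snd.fst.ennreal_ofReal
      (hW.comp (measurable_fst.prodMk measurable_snd.snd)))

lemma abs_layer (F : ℝ × ℝ → ℝ) (x : ℝ × ℝ) :
    ENNReal.ofReal |F x| = ∫⁻ s in Ioi (0 : ℝ),
      ({p : ℝ × ℝ | s < |F p|}).indicator (fun _ => (1 : ℝ≥0∞)) x := by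
  have h : ∀ s : ℝ, ({p : ℝ × ℝ | s < |F p|}).indicator (fun _ => (1 : ℝ≥0∞)) x
      = (Iio |F x|).indicator (fun _ => (1 : ℝ≥0∞)) s := fun s => rfl
  rw [lintegral_congr h]
  have h2 : ∫⁻ a in Ioi (0:ℝ), (Iio |F x|).indicator (fun _ => (1:ℝ≥0∞)) a
      = (volume.restrict (Ioi (0:ℝ))) (Iio |F x|) := lintegral_indicator_one measurableSet_Iio
  rw [h2, Measure.restrict_apply measurableSet_Iio, Set.Iio_inter_Ioi, Real.volume_Ioo, sub_zero]

theorem stmt15 (f g : ℝ × ℝ → ℝ) (hf : Measurable f) (hg : Measurable g) :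
    (∫⁻ x, ENNReal.ofReal |f x * g x|) ≤ (∫⁻ x in Quad, rearr2 f x * rearr2 g x) ∧
      (∫⁻ x in Quad, rearr2 f x * rearr2 g x)
        ≤ ∫⁻ t in Set.Ioi (0 : ℝ),
            decRe volume (fun y => ENNReal.ofReal |f y|) t *
              decRe volume (fun y => ENNReal.ofReal |g y|) t := by
  have hEs : ∀ s : ℝ, MeasurableSet {p : ℝ × ℝ | s < |f p|} := fun s =>
    measurableSet_lt measurable_const hf.abs
  have hFt : ∀ t : ℝ, MeasurableSet {p : ℝ × ℝ | t < |g p|} := fun t =>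
    measurableSet_lt measurable_const hg.abs
  have hMEf : MeasurableSet {p : ℝ × (ℝ × ℝ) | p.2 ∈ {q : ℝ × ℝ | p.1 < |f q|}} :=
    measurableSet_lt measurable_fst (hf.abs.comp measurable_snd)
  have hMEg : MeasurableSet {p : ℝ × (ℝ × ℝ) | p.2 ∈ {q : ℝ × ℝ | p.1 < |g q|}} :=
    measurableSet_lt measurable_fst (hg.abs.comp measurable_snd)
  have mid_eq : (∫⁻ x in Quad, rearr2 f x * rearr2 g x)
      = ∫⁻ s in Ioi (0 : ℝ), ∫⁻ t in Ioi (0 : ℝ),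
          volume (starSet {p : ℝ × ℝ | s < |f p|} ∩ starSet {p : ℝ × ℝ | t < |g p|}) := by
    simp only [rearr2]
    rw [tonelli_ind (volume.restrict Quad) (fun s => starSet {p : ℝ × ℝ | s < |f p|})
      (fun t => starSet {p : ℝ × ℝ | t < |g p|}) (star_joint_measurable hf)
      (star_joint_measurable hg)]
    refine lintegral_congr fun s => lintegral_congr fun t => ?_
    rw [Measure.restrict_apply ((starSet_measurable _).inter (starSet_measurable _))]
    rw [Set.inter_eq_left.mpr (inter_subset_left.trans (starSet_subset_Quad _))]
  constructor
  · have lhs_eq : (∫⁻ x, ENNReal.ofReal |f x * g x|)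
        = ∫⁻ s in Ioi (0 : ℝ), ∫⁻ t in Ioi (0 : ℝ),
            volume ({p : ℝ × ℝ | s < |f p|} ∩ {p : ℝ × ℝ | t < |g p|}) := by
      have h1 : ∀ x : ℝ × ℝ, ENNReal.ofReal |f x * g x|
          = (∫⁻ s in Ioi (0 : ℝ), ({p : ℝ × ℝ | s < |f p|}).indicator (fun _ => (1:ℝ≥0∞)) x) *
            (∫⁻ t in Ioi (0 : ℝ), ({p : ℝ × ℝ | t < |g p|}).indicator (fun _ => (1:ℝ≥0∞)) x) := by
        intro x
        rw [abs_mul, ENNReal.ofReal_mul (abs_nonneg _), abs_layer f x, abs_layer g x]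
      rw [lintegral_congr h1, tonelli_ind volume _ _ hMEf hMEg]
    rw [lhs_eq, mid_eq]
    refine lintegral_mono fun s => lintegral_mono fun t => ?_
    exact vol_inter_le_star _ _ (hEs s) (hFt t)
  · have rhs_eq : (∫⁻ t in Set.Ioi (0 : ℝ),
        decRe volume (fun y => ENNReal.ofReal |f y|) t *
          decRe volume (fun y => ENNReal.ofReal |g y|) t)
        = ∫⁻ s in Ioi (0 : ℝ), ∫⁻ t in Ioi (0 : ℝ), (volume.restrict (Ioi (0:ℝ)))
            ({r : ℝ | ENNReal.ofReal s < decRe volume (fun y => ENNReal.ofReal |f y|) r} ∩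
             {r : ℝ | ENNReal.ofReal t < decRe volume (fun y => ENNReal.ofReal |g y|) r}) := by
      have h1 : ∀ r : ℝ, ∀ F : ℝ × ℝ → ℝ,
          decRe volume (fun y => ENNReal.ofReal |F y|) r
          = ∫⁻ s in Ioi (0 : ℝ), ({r' : ℝ | ENNReal.ofReal s <
              decRe volume (fun y => ENNReal.ofReal |F y|) r'}).indicator
                (fun _ => (1 : ℝ≥0∞)) r := by
        intro r F
        rw [← layer_indicator (decRe volume (fun y => ENNReal.ofReal |F y|) r)]
        exact lintegral_congr fun s => rfl
      have h2 : ∀ r : ℝ, decRe volume (fun y => ENNReal.ofReal |f y|) r *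
          decRe volume (fun y => ENNReal.ofReal |g y|) r
          = (∫⁻ s in Ioi (0 : ℝ), ({r' : ℝ | ENNReal.ofReal s <
              decRe volume (fun y => ENNReal.ofReal |f y|) r'}).indicator
                (fun _ => (1 : ℝ≥0∞)) r) *
            (∫⁻ t in Ioi (0 : ℝ), ({r' : ℝ | ENNReal.ofReal t <
              decRe volume (fun y => ENNReal.ofReal |g y|) r'}).indicator
                (fun _ => (1 : ℝ≥0∞)) r) := by
        intro r
        rw [← h1 r f, ← h1 r g]
      rw [lintegral_congr h2]
      exact tonelli_ind (volume.restrict (Ioi (0:ℝ))) _ _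
        (measurableSet_lt measurable_fst.ennreal_ofReal
          ((decRe_measurable volume _).comp measurable_snd))
        (measurableSet_lt measurable_fst.ennreal_ofReal
          ((decRe_measurable volume _).comp measurable_snd))
    rw [mid_eq, rhs_eq]
    refine lintegral_mono_ae ((ae_restrict_iff' measurableSet_Ioi).2
      (ae_of_all _ fun s hs => ?_))
    refine lintegral_mono_ae ((ae_restrict_iff' measurableSet_Ioi).2
      (ae_of_all _ fun t ht => ?_))
    have hASm : MeasurableSet {r : ℝ | ENNReal.ofReal s <
        decRe volume (fun y => ENNReal.ofReal |f y|) r} :=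
      measurableSet_lt measurable_const (decRe_measurable volume _)
    have hBSm : MeasurableSet {r : ℝ | ENNReal.ofReal t <
        decRe volume (fun y => ENNReal.ofReal |g y|) r} :=
      measurableSet_lt measurable_const (decRe_measurable volume _)
    rw [Measure.restrict_apply (hASm.inter hBSm)]
    have hset : ({r : ℝ | ENNReal.ofReal s < decRe volume (fun y => ENNReal.ofReal |f y|) r} ∩
        {r : ℝ | ENNReal.ofReal t < decRe volume (fun y => ENNReal.ofReal |g y|) r}) ∩ Ioi 0
        = {r : ℝ | 0 < r ∧ ENNReal.ofReal r <
            min (volume {p : ℝ × ℝ | s < |f p|}) (volume {p : ℝ × ℝ | t < |g p|})} := by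
      ext r
      simp only [mem_inter_iff, mem_setOf_eq, mem_Ioi, lt_min_iff]
      rw [lt_decRe_iff, lt_decRe_iff]
      have e1 : {a : ℝ × ℝ | ENNReal.ofReal s < ENNReal.ofReal |f a|}
          = {p : ℝ × ℝ | s < |f p|} := by
        ext a
        simp [ENNReal.ofReal_lt_ofReal_iff_of_nonneg (le_of_lt (mem_Ioi.mp hs))]
      have e2 : {a : ℝ × ℝ | ENNReal.ofReal t < ENNReal.ofReal |g a|}
          = {p : ℝ × ℝ | t < |g p|} := by
        ext a
        simp [ENNReal.ofReal_lt_ofReal_iff_of_nonneg (le_of_lt (mem_Ioi.mp ht))]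
      rw [e1, e2]
      tauto
    rw [hset, vol_pos_lt]
    exact vol_starSet_inter_le _ _ (hEs s) (hFt t)
end
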